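/- Let A be an m×n matrix and B an m×q matrix with entries in T = ℝ ∪ {−∞} such that every column of A has at least one finite entry, every row of A has at least one finite entry, and every row of B has at least one finite entry, and let P be a q×n row-stochastic matrix; let F : ℝⁿ → ℝⁿ be the associated Shapley operator and F* : ℝᵐ → ℝᵐ the dual Shapley operator. Then it is not possible that both of the following hold: there exists x ∈ ℝⁿ with x_i < F(x)_i for all i, and there exists y ∈ ℝᵐ with y_i < F*(y)_i for all i. (At most one of the strict feasibility problems 𝒫_ℝ(F) and 𝒫_ℝ(F*) is feasible.) -/

import Mathlib

noncomputable section

variable {m n q : ℕ}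

/-- The real value of a finite element of `T = ℝ ∪ {-∞}` (junk value `0` at `-∞`). -/
def sval (a : WithBot ℝ) : ℝ := a.unbotD 0

/-- The Shapley operator `F : ℝⁿ → ℝⁿ` associated with `A, B, P`. -/
def shapley (A : Fin m → Fin n → WithBot ℝ) (B : Fin m → Fin q → WithBot ℝ)
    (P : Fin q → Fin n → ℝ) (x : Fin n → ℝ) : Fin n → ℝ := fun j =>
  sInf {r : ℝ | ∃ i, A i j ≠ ⊥ ∧
    r = - sval (A i j) +
      sSup {s : ℝ | ∃ k, B i k ≠ ⊥ ∧ s = sval (B i k) + ∑ l, P k l * x l}}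

/-- The dual Shapley operator `F* : ℝᵐ → ℝᵐ`:
`F*(y)_i = min_{k : B_{ik} ≠ -∞} ( -B_{ik} + Σ_l P_{kl} · max_{i' : A_{i'l} ≠ -∞} (A_{i'l} + y_{i'}) )`. -/
def dualShapley (A : Fin m → Fin n → WithBot ℝ) (B : Fin m → Fin q → WithBot ℝ)
    (P : Fin q → Fin n → ℝ) (y : Fin m → ℝ) : Fin m → ℝ := fun i =>
  sInf {r : ℝ | ∃ k, B i k ≠ ⊥ ∧
    r = - sval (B i k) +
      ∑ l, P k l * sSup {s : ℝ | ∃ i', A i' l ≠ ⊥ ∧ s = sval (A i' l) + y i'}}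

lemma fin_set_eq {α : Type*} (p : α → Prop) (f : α → ℝ) :
    {r : ℝ | ∃ i, p i ∧ r = f i} = f '' {i | p i} := by
  ext r
  simp [Set.mem_image, eq_comm]

lemma fin_set_finite {α : Type*} [Finite α] (p : α → Prop) (f : α → ℝ) :
    {r : ℝ | ∃ i, p i ∧ r = f i}.Finite := by
  rw [fin_set_eq]
  exact (Set.toFinite _).image f

lemma csSup_attained {α : Type*} [Finite α] (p : α → Prop) (f : α → ℝ) (h : ∃ i, p i) :
    ∃ i, p i ∧ sSup {r : ℝ | ∃ i, p i ∧ r = f i} = f i := by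
  obtain ⟨i0, hi0⟩ := h
  have hne : {r : ℝ | ∃ i, p i ∧ r = f i}.Nonempty := ⟨f i0, i0, hi0, rfl⟩
  exact hne.csSup_mem (fin_set_finite p f)

lemma le_csSup' {α : Type*} [Finite α] (p : α → Prop) (f : α → ℝ) {i : α} (hi : p i) :
    f i ≤ sSup {r : ℝ | ∃ i, p i ∧ r = f i} :=
  le_csSup (fin_set_finite p f).bddAbove ⟨i, hi, rfl⟩

lemma finCsInf_le {α : Type*} [Finite α] (p : α → Prop) (f : α → ℝ) {i : α} (hi : p i) :
    sInf {r : ℝ | ∃ i, p i ∧ r = f i} ≤ f i :=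
  csInf_le (fin_set_finite p f).bddBelow ⟨i, hi, rfl⟩

/-- At most one of the strict feasibility problems `𝒫_ℝ(F)` and `𝒫_ℝ(F*)` is feasible. -/
theorem stmt5 (hm : 0 < m) (hn : 0 < n) (hq : 0 < q)
    (A : Fin m → Fin n → WithBot ℝ) (B : Fin m → Fin q → WithBot ℝ)
    (P : Fin q → Fin n → ℝ)
    (hAcol : ∀ j, ∃ i, A i j ≠ ⊥)
    (hArow : ∀ i, ∃ j, A i j ≠ ⊥)
    (hBrow : ∀ i, ∃ k, B i k ≠ ⊥)
    (hPnn : ∀ k l, 0 ≤ P k l)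
    (hPsum : ∀ k, ∑ l, P k l = 1) :
    ¬ ((∃ x : Fin n → ℝ, ∀ j, x j < shapley A B P x j) ∧
       (∃ y : Fin m → ℝ, ∀ i, y i < dualShapley A B P y i)) := by
  rintro ⟨⟨x, hx⟩, ⟨y, hy⟩⟩
  set M : Fin n → ℝ :=
    fun l => sSup {s : ℝ | ∃ i', A i' l ≠ ⊥ ∧ s = sval (A i' l) + y i'} with hMdef
  -- attainment of M and upper bound property
  have hMatt : ∀ l, ∃ i', A i' l ≠ ⊥ ∧ M l = sval (A i' l) + y i' := fun l =>
    csSup_attained (fun i' => A i' l ≠ ⊥) (fun i' => sval (A i' l) + y i') (hAcol l)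
  have hMub : ∀ l i, A i l ≠ ⊥ → sval (A i l) + y i ≤ M l := fun l i hi =>
    le_csSup' (fun i' => A i' l ≠ ⊥) (fun i' => sval (A i' l) + y i') hi
  -- primal strict inequalities
  have hprimal : ∀ j i, A i j ≠ ⊥ →
      ∃ k, B i k ≠ ⊥ ∧ sval (A i j) + x j < sval (B i k) + ∑ l, P k l * x l := by
    intro j i hij
    have h1 : x j < - sval (A i j) +
        sSup {s : ℝ | ∃ k, B i k ≠ ⊥ ∧ s = sval (B i k) + ∑ l, P k l * x l} := by
      have := finCsInf_le (fun i => A i j ≠ ⊥)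
        (fun i => - sval (A i j) +
          sSup {s : ℝ | ∃ k, B i k ≠ ⊥ ∧ s = sval (B i k) + ∑ l, P k l * x l}) hij
      exact lt_of_lt_of_le (hx j) this
    obtain ⟨k, hk, hke⟩ := csSup_attained (fun k => B i k ≠ ⊥)
      (fun k => sval (B i k) + ∑ l, P k l * x l) (hBrow i)
    refine ⟨k, hk, ?_⟩
    rw [hke] at h1
    linarith
  -- dual strict inequalities
  have hdual : ∀ i k, B i k ≠ ⊥ →
      sval (B i k) + y i < ∑ l, P k l * M l := by
    intro i k hik
    have := finCsInf_le (fun k => B i k ≠ ⊥)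
      (fun k => - sval (B i k) + ∑ l, P k l * M l) hik
    have h2 : y i < - sval (B i k) + ∑ l, P k l * M l := lt_of_lt_of_le (hy i) this
    linarith
  -- choose argmax of x + M
  obtain ⟨j0, -, hj0⟩ := Finset.exists_max_image (Finset.univ : Finset (Fin n))
    (fun j => x j + M j) ⟨⟨0, hn⟩, Finset.mem_univ _⟩
  obtain ⟨i0, hi0, hMj0⟩ := hMatt j0
  obtain ⟨k0, hk0, hpk⟩ := hprimal j0 i0 hi0
  have hdk := hdual i0 k0 hk0
  -- sum bound : ∑ P k0 l * (x l + M l) ≤ x j0 + M j0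
  have hsum : ∑ l, P k0 l * x l + ∑ l, P k0 l * M l ≤ x j0 + M j0 := by
    have h1 : ∑ l, P k0 l * x l + ∑ l, P k0 l * M l
        = ∑ l, P k0 l * (x l + M l) := by
      rw [← Finset.sum_add_distrib]
      exact Finset.sum_congr rfl fun l _ => by ring
    have h2 : ∑ l, P k0 l * (x l + M l) ≤ ∑ l, P k0 l * (x j0 + M j0) := by
      refine Finset.sum_le_sum fun l _ => ?_
      exact mul_le_mul_of_nonneg_left (hj0 l (Finset.mem_univ l)) (hPnn k0 l)
    have h3 : ∑ l, P k0 l * (x j0 + M j0) = x j0 + M j0 := by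
      rw [← Finset.sum_mul, hPsum k0, one_mul]
    linarith
  linarith [hpk, hdk, hsum, hMj0.ge, hMj0.le]
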